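/- Let (T, Σ, μ) be an atomless finite measure space, Y an ordered Banach space with int Y₊ ≠ ∅, Ω finite, and g, a : T × Ω → Y₊ Bochner integrable in t for each ω, with z(ω) := ∫_S (a(·,ω) − g(·,ω)) dμ ≫ 0 for all ω ∈ Ω, where S ∈ Σ, μ(S) > 0. Then for every δ ∈ (0,1) there exists F ∈ Σ, F ⊆ S, with μ(F) = δ·μ(S) and ∫_F (a(·,ω) − g(·,ω)) dμ ≫ 0 for all ω ∈ Ω. -/

import Mathlib

open MeasureTheory Filter Topology

def MeasureAtomless {X : Type*} [MeasurableSpace X] (μ : Measure X) : Prop :=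
  ∀ A : Set X, MeasurableSet A → μ A ≠ 0 →
    ∃ B ⊆ A, MeasurableSet B ∧ 0 < μ B ∧ μ B < μ A

open ENNReal

lemma atomless_half {X : Type*} [MeasurableSpace X] (μ : Measure X) [IsFiniteMeasure μ]
    (hμ : MeasureAtomless μ) {A : Set X} (hA : MeasurableSet A) (h0 : μ A ≠ 0) :
    ∃ B ⊆ A, MeasurableSet B ∧ 0 < μ B ∧ μ B ≤ μ A / 2 := by
  obtain ⟨B, hBA, hB, hB0, hBlt⟩ := hμ A hA h0
  rcases le_or_gt (μ B) (μ A / 2) with h | h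
  · exact ⟨B, hBA, hB, hB0, h⟩
  · refine ⟨A \ B, Set.diff_subset, hA.diff hB, ?_, ?_⟩
    · rw [measure_diff hBA hB.nullMeasurableSet (measure_ne_top μ B)]
      exact tsub_pos_of_lt hBlt
    · rw [measure_diff hBA hB.nullMeasurableSet (measure_ne_top μ B)]
      calc μ A - μ B ≤ μ A - μ A / 2 := tsub_le_tsub_left h.le _
      _ = μ A / 2 := ENNReal.sub_half (measure_ne_top μ A)

lemma atomless_small {X : Type*} [MeasurableSpace X] (μ : Measure X) [IsFiniteMeasure μ]
    (hμ : MeasureAtomless μ) {A : Set X} (hA : MeasurableSet A) (h0 : μ A ≠ 0)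
    {ε : ℝ≥0∞} (hε : ε ≠ 0) :
    ∃ B ⊆ A, MeasurableSet B ∧ 0 < μ B ∧ μ B ≤ ε := by
  have key : ∀ n : ℕ, ∃ B ⊆ A, MeasurableSet B ∧ 0 < μ B ∧ μ B ≤ μ A * 2⁻¹ ^ n := by
    intro n
    induction n with
    | zero => exact ⟨A, subset_rfl, hA, pos_iff_ne_zero.mpr h0, by simp⟩
    | succ n ih =>
      obtain ⟨B, hBA, hB, hB0, hBle⟩ := ih
      obtain ⟨C, hCB, hC, hC0, hCle⟩ := atomless_half μ hμ hB hB0.ne'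
      refine ⟨C, hCB.trans hBA, hC, hC0, ?_⟩
      calc μ C ≤ μ B / 2 := hCle
      _ = μ B * 2⁻¹ := by rw [div_eq_mul_inv]
      _ ≤ μ A * 2⁻¹ ^ n * 2⁻¹ := by gcongr
      _ = μ A * 2⁻¹ ^ (n + 1) := by rw [pow_succ, mul_assoc]
  have htend : Tendsto (fun n : ℕ => μ A * 2⁻¹ ^ n) atTop (𝓝 0) := by
    have := ENNReal.Tendsto.const_mul
      (ENNReal.tendsto_pow_atTop_nhds_zero_of_lt_one (by norm_num : (2⁻¹ : ℝ≥0∞) < 1))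
      (Or.inr (measure_ne_top μ A))
    simpa using this
  obtain ⟨n, hn⟩ := (htend.eventually_lt_const (pos_iff_ne_zero.mpr hε)).exists
  obtain ⟨B, hBA, hB, hB0, hBle⟩ := key n
  exact ⟨B, hBA, hB, hB0, hBle.trans hn.le⟩

lemma atomless_exists_measure_eq {X : Type*} [MeasurableSpace X] (μ : Measure X)
    [IsFiniteMeasure μ] (hμ : MeasureAtomless μ) {A : Set X} (hA : MeasurableSet A)
    {r : ℝ≥0∞} (hr : r ≤ μ A) :
    ∃ B ⊆ A, MeasurableSet B ∧ μ B = r := by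
  classical
  -- candidate subtype
  let T := {B : Set X // MeasurableSet B ∧ B ⊆ A ∧ μ B ≤ r}
  let s : T → ℝ≥0∞ := fun B => ⨆ C : {C : T // B.1 ⊆ C.1}, μ C.1.1
  have hsle : ∀ B : T, s B ≤ r := fun B => iSup_le fun C => C.1.2.2.2
  have hstep : ∀ (n : ℕ) (B : T), ∃ C : T, B.1 ⊆ C.1 ∧ s B ≤ μ C.1 + ((n : ℝ≥0∞))⁻¹ := by
    intro n B
    rcases le_or_gt (s B) ((n : ℝ≥0∞))⁻¹ with h | h
    · exact ⟨B, subset_rfl, h.trans (le_add_self)⟩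
    · have hfin : s B ≠ ∞ := ((hsle B).trans_lt (hr.trans_lt (measure_lt_top μ A))).ne
      have hinv0 : ((n : ℝ≥0∞))⁻¹ ≠ 0 := ENNReal.inv_ne_zero.mpr (natCast_ne_top n)
      have hs0 : s B ≠ 0 := fun h0 => by simp [h0] at h
      have hlt : s B - ((n : ℝ≥0∞))⁻¹ < s B := ENNReal.sub_lt_self hfin hs0 hinv0
      obtain ⟨C, hC⟩ := lt_iSup_iff.mp hlt
      exact ⟨C.1, C.2, tsub_le_iff_right.mp hC.le⟩
  choose step hstep1 hstep2 using hstep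
  let init : T := ⟨∅, MeasurableSet.empty, Set.empty_subset _, by simp⟩
  let seq : ℕ → T := fun n => Nat.rec init (fun n B => step n B) n
  have seq_succ : ∀ n, seq (n + 1) = step n (seq n) := fun n => rfl
  have mono : Monotone fun n => (seq n).1 := by
    apply monotone_nat_of_le_succ
    intro n
    exact hstep1 n (seq n)
  set B := ⋃ n, (seq n).1 with hB
  have hBmeas : MeasurableSet B := MeasurableSet.iUnion fun n => (seq n).2.1
  have hBA : B ⊆ A := Set.iUnion_subset fun n => (seq n).2.2.1
  have hμB : μ B = ⨆ n, μ (seq n).1 := mono.directed_le.measure_iUnion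
  have hμBr : μ B ≤ r := hμB ▸ iSup_le fun n => (seq n).2.2.2
  rcases eq_or_lt_of_le hμBr with heq | hlt
  · exact ⟨B, hBA, hBmeas, heq⟩
  exfalso
  -- find a small piece outside B
  have hABpos : μ (A \ B) ≠ 0 := by
    have h1 : r - μ B ≤ μ (A \ B) := by
      rw [measure_diff hBA hBmeas.nullMeasurableSet (measure_ne_top μ B)]
      exact tsub_le_tsub_right hr _
    have : (0 : ℝ≥0∞) < r - μ B := tsub_pos_of_lt hlt
    intro h
    rw [h] at h1
    exact absurd (le_antisymm h1 zero_le) this.ne'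
  obtain ⟨C, hCAB, hCmeas, hC0, hCle⟩ := atomless_small μ hμ (hA.diff hBmeas) hABpos
    (ε := r - μ B) (tsub_pos_of_lt hlt).ne'
  have hkey : ∀ n, μ (seq n).1 + μ C ≤ μ (seq (n + 1)).1 + ((n : ℝ≥0∞))⁻¹ := by
    intro n
    have hsub : (seq n).1 ⊆ B := Set.subset_iUnion (fun n => (seq n).1) n
    have hdisj : Disjoint (seq n).1 C := by
      refine Set.disjoint_left.mpr fun x hx hxC => ?_
      exact (hCAB hxC).2 (hsub hx)
    have hD : μ ((seq n).1 ∪ C) = μ (seq n).1 + μ C := measure_union hdisj hCmeas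
    have hDr : μ ((seq n).1 ∪ C) ≤ r := by
      rw [hD]
      calc μ (seq n).1 + μ C ≤ μ B + (r - μ B) :=
        add_le_add (measure_mono hsub) hCle
      _ = r := add_tsub_cancel_of_le hlt.le
    have hcand : s (seq n) ≥ μ ((seq n).1 ∪ C) := by
      refine le_iSup_of_le (i := ⟨⟨(seq n).1 ∪ C, (seq n).2.1.union hCmeas,
        Set.union_subset (seq n).2.2.1 (hCAB.trans Set.diff_subset), hDr⟩,
        Set.subset_union_left⟩) le_rfl
    calc μ (seq n).1 + μ C = μ ((seq n).1 ∪ C) := hD.symm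
      _ ≤ s (seq n) := hcand
      _ ≤ μ (step n (seq n)).1 + ((n : ℝ≥0∞))⁻¹ := hstep2 n (seq n)
      _ = μ (seq (n + 1)).1 + ((n : ℝ≥0∞))⁻¹ := by rw [seq_succ]
  have l1 : Tendsto (fun n => μ (seq n).1) atTop (𝓝 (μ B)) := by
    rw [hμB]
    exact tendsto_atTop_iSup fun n m h => measure_mono (mono h)
  have l2 : Tendsto (fun n => μ (seq (n + 1)).1 + ((n : ℝ≥0∞))⁻¹) atTop (𝓝 (μ B + 0)) :=
    (l1.comp (tendsto_add_atTop_nat 1)).add ENNReal.tendsto_inv_nat_nhds_zero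
  have l3 : Tendsto (fun n => μ (seq n).1 + μ C) atTop (𝓝 (μ B + μ C)) :=
    l1.add tendsto_const_nhds
  have hfinal : μ B + μ C ≤ μ B + 0 := le_of_tendsto_of_tendsto' l3 l2 hkey
  rw [add_zero] at hfinal
  have : μ C ≤ 0 := (ENNReal.add_le_add_iff_left (measure_ne_top μ B)).mp (by simpa using hfinal)
  exact (hC0.trans_le this).ne' rfl

/-- Shrinking a blocking coalition: if `∫_S (a − g) ≫ 0` for all states then for every
`δ ∈ (0,1)` there is `F ⊆ S` with `μ F = δ·μ S` and `∫_F (a − g) ≫ 0` for all states. -/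
theorem shrink_blocking_coalition {X : Type*} [MeasurableSpace X]
    (μ : Measure X) [IsFiniteMeasure μ] (hμ : MeasureAtomless μ)
    {Y : Type*} [NormedAddCommGroup Y] [NormedSpace ℝ Y] [CompleteSpace Y] [PartialOrder Y]
    (hcone : ∀ (c : ℝ) (x : Y), 0 < c → 0 ≤ x → 0 ≤ c • x)
    (hiY : (interior {y : Y | 0 ≤ y}).Nonempty)
    {Ω : Type*} [Fintype Ω]
    (g a : X → Ω → Y)
    (hgi : ∀ ω, Integrable (fun t => g t ω) μ) (hai : ∀ ω, Integrable (fun t => a t ω) μ)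
    {S : Set X} (hS : MeasurableSet S) (hSpos : 0 < μ S)
    (hz : ∀ ω : Ω, (∫ t in S, (a t ω - g t ω) ∂μ) ∈ interior {y : Y | 0 ≤ y})
    {δ : ℝ} (hδ : δ ∈ Set.Ioo (0 : ℝ) 1) :
    ∃ F : Set X, MeasurableSet F ∧ F ⊆ S ∧ (μ F).toReal = δ * (μ S).toReal ∧
      ∀ ω : Ω, (∫ t in F, (a t ω - g t ω) ∂μ) ∈ interior {y : Y | 0 ≤ y} := by
  classical
  obtain ⟨hδ0, hδ1⟩ := hδ
  set P : Set Y := {y : Y | 0 ≤ y} with hP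
  -- the scaled targets are interior points
  have hδz : ∀ ω, δ • (∫ t in S, (a t ω - g t ω) ∂μ) ∈ interior P := by
    intro ω
    have hmap : IsOpenMap fun y : Y => δ • y := isOpenMap_smul₀ hδ0.ne'
    have hsub : (fun y : Y => δ • y) '' interior P ⊆ interior P := by
      apply interior_maximal ?_ (hmap _ isOpen_interior)
      rintro _ ⟨y, hy, rfl⟩
      exact hcone δ y hδ0 (interior_subset hy)
    exact hsub ⟨_, hz ω, rfl⟩
  -- a uniform radius
  obtain ⟨ε, hε0, hball⟩ : ∃ ε : ℝ, 0 < ε ∧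
      ∀ ω, Metric.ball (δ • (∫ t in S, (a t ω - g t ω) ∂μ)) ε ⊆ interior P := by
    have h : ∀ ω, ∃ ε : ℝ, 0 < ε ∧
        Metric.ball (δ • (∫ t in S, (a t ω - g t ω) ∂μ)) ε ⊆ interior P := fun ω =>
      Metric.isOpen_iff.mp isOpen_interior _ (hδz ω)
    choose εf hεf0 hεfb using h
    rcases isEmpty_or_nonempty Ω with hΩ | hΩ
    · exact ⟨1, one_pos, fun ω => (hΩ.false ω).elim⟩
    · refine ⟨Finset.univ.inf' Finset.univ_nonempty εf, ?_, fun ω => ?_⟩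
      · exact (Finset.lt_inf'_iff _).mpr fun ω _ => hεf0 ω
      · exact (Metric.ball_subset_ball (Finset.inf'_le _ (Finset.mem_univ ω))).trans (hεfb ω)
  -- the vector-valued integrand
  set f : X → (Ω → Y) := fun t ω => a t ω - g t ω with hf
  have hfcoord : ∀ ω, Integrable (fun t => f t ω) μ := fun ω => (hai ω).sub (hgi ω)
  have hfint : Integrable f μ := by
    have hfeq : f = fun t => ∑ ω : Ω, Pi.single ω (f t ω) := by
      funext t; rw [Finset.univ_sum_single]
    rw [hfeq]
    apply integrable_finset_sum
    intro ω _
    let L : Y →L[ℝ] (Ω → Y) := ⟨LinearMap.single ℝ (fun _ => Y) ω, by exact continuous_single (A := fun _ : Ω => Y) ω⟩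
    exact L.integrable_comp (hfcoord ω)
  have hfS : IntegrableOn f S μ := hfint.integrableOn
  -- simple function approximation
  obtain ⟨s, hs, hsmem⟩ := (memLp_one_iff_integrable.mpr hfS).exists_simpleFunc_eLpNorm_sub_lt
    (one_ne_top) (ε := ENNReal.ofReal (ε / 4))
    ((ENNReal.ofReal_pos.mpr (by positivity)).ne')
  have hsint : ∀ G : Set X, IntegrableOn (⇑s) G μ :=
    fun G => SimpleFunc.integrable_of_isFiniteMeasure s (μ := μ.restrict G)
  have hsubint : Integrable (f - ⇑s) (μ.restrict S) := hfS.sub (hsint S)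
  set err : ℝ := ∫ t in S, ‖f t - s t‖ ∂μ with herr
  have herrlt : err < ε / 4 := by
    have h1 : err = (eLpNorm (f - ⇑s) 1 (μ.restrict S)).toReal := by
      rw [herr, eLpNorm_one_eq_lintegral_enorm,
        ← integral_norm_eq_lintegral_enorm hsubint.aestronglyMeasurable]
      rfl
    rw [h1]
    calc (eLpNorm (f - ⇑s) 1 (μ.restrict S)).toReal
        < (ENNReal.ofReal (ε / 4)).toReal :=
          ENNReal.toReal_lt_toReal (ne_of_lt (lt_of_lt_of_le hs le_top)) ofReal_ne_top |>.mpr hs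
      _ = ε / 4 := ENNReal.toReal_ofReal (by positivity)
  have herr0 : 0 ≤ err := integral_nonneg fun t => norm_nonneg _
  -- partition of S according to values of s
  set A : (Ω → Y) → Set X := fun c => S ∩ ⇑s ⁻¹' {c} with hAdef
  have hAmeas : ∀ c, MeasurableSet (A c) := fun c => hS.inter (s.measurableSet_fiber c)
  have hAsub : ∀ c, A c ⊆ S := fun c => Set.inter_subset_left
  have hAd : Set.Pairwise (↑s.range) (Function.onFun Disjoint A) := by
    intro c _ d _ hcd
    refine Set.disjoint_left.mpr fun x hx hx' => hcd ?_
    rw [← hx.2, ← hx'.2]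
  have hAcover : ⋃ c ∈ s.range, A c = S := by
    ext t
    simp only [Set.mem_iUnion, exists_prop]
    constructor
    · rintro ⟨c, _, ht, _⟩; exact ht
    · intro ht; exact ⟨s t, s.mem_range_self t, ht, rfl⟩
  -- shrink each piece
  have hδ1' : ENNReal.ofReal δ ≤ 1 := ENNReal.ofReal_le_one.mpr hδ1.le
  have hpiece : ∀ c : Ω → Y, ∃ B ⊆ A c, MeasurableSet B ∧ μ B = ENNReal.ofReal δ * μ (A c) :=
    fun c => atomless_exists_measure_eq μ hμ (hAmeas c)
      (mul_le_of_le_one_left zero_le hδ1')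
  choose Bf hBsub hBmeas hBmeq using hpiece
  have hBS : ∀ c, Bf c ⊆ S := fun c => (hBsub c).trans (hAsub c)
  have hBd : Set.Pairwise (↑s.range) (Function.onFun Disjoint Bf) := by
    intro c hc d hd hcd
    exact (hAd hc hd hcd).mono (hBsub c) (hBsub d)
  set F : Set X := ⋃ c ∈ s.range, Bf c with hFdef
  have hFmeas : MeasurableSet F := by
    apply MeasurableSet.biUnion s.range.countable_toSet fun c _ => hBmeas c
  have hFS : F ⊆ S := Set.iUnion₂_subset fun c _ => hBS c
  -- measure of F
  have hμS : μ S = ∑ c ∈ s.range, μ (A c) := by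
    rw [← hAcover]
    exact measure_biUnion_finset hAd fun c _ => hAmeas c
  have hμF : μ F = ENNReal.ofReal δ * μ S := by
    rw [hFdef, measure_biUnion_finset hBd fun c _ => hBmeas c, hμS, Finset.mul_sum]
    exact Finset.sum_congr rfl fun c _ => hBmeq c
  have hμFtoReal : (μ F).toReal = δ * (μ S).toReal := by
    rw [hμF, ENNReal.toReal_mul, ENNReal.toReal_ofReal hδ0.le]
  -- the simple function splits exactly
  have hsint' : ∫ t in F, s t ∂μ = δ • ∫ t in S, s t ∂μ := by
    have h1 : ∫ t in F, s t ∂μ = ∑ c ∈ s.range, ∫ t in Bf c, s t ∂μ :=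
      integral_biUnion_finset s.range (fun c _ => hBmeas c) hBd fun c _ => hsint _
    have h2 : ∫ t in S, s t ∂μ = ∑ c ∈ s.range, ∫ t in A c, s t ∂μ := by
      rw [← hAcover]
      exact integral_biUnion_finset s.range (fun c _ => hAmeas c) hAd fun c _ => hsint _
    have h3 : ∀ c, ∫ t in Bf c, s t ∂μ = (μ (Bf c)).toReal • c := by
      intro c
      rw [setIntegral_congr_fun (hBmeas c) (g := fun _ => c)
        (fun t ht => ((hBsub c) ht).2), setIntegral_const, measureReal_def]
    have h4 : ∀ c, ∫ t in A c, s t ∂μ = (μ (A c)).toReal • c := by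
      intro c
      rw [setIntegral_congr_fun (hAmeas c) (g := fun _ => c) (fun t ht => ht.2),
        setIntegral_const, measureReal_def]
    rw [h1, h2, Finset.smul_sum]
    refine Finset.sum_congr rfl fun c _ => ?_
    rw [h3, h4, hBmeq, ENNReal.toReal_mul, ENNReal.toReal_ofReal hδ0.le, smul_smul]
  refine ⟨F, hFmeas, hFS, hμFtoReal, ?_⟩
  intro ω
  have hFint : IntegrableOn f F μ := hfS.mono_set hFS
  have hcoord : ∀ (G : Set X), IntegrableOn f G μ →
      (∫ t in G, f t ∂μ) ω = ∫ t in G, (a t ω - g t ω) ∂μ := by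
    intro G h
    have h2 := (ContinuousLinearMap.proj (R := ℝ) (φ := fun _ : Ω => Y) ω).integral_comp_comm h
    exact h2.symm
  have hnorm1 : ‖∫ t in F, (f t - s t) ∂μ‖ ≤ err := by
    refine (norm_integral_le_integral_norm _).trans ?_
    refine setIntegral_mono_set hsubint.norm ?_ ?_
    · exact Eventually.of_forall fun t => norm_nonneg _
    · exact HasSubset.Subset.eventuallyLE hFS
  have hnorm2 : ‖∫ t in S, (f t - s t) ∂μ‖ ≤ err := norm_integral_le_integral_norm _
  have hkey : ‖(∫ t in F, f t ∂μ) - δ • ∫ t in S, f t ∂μ‖ < ε := by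
    have e1 : ∫ t in F, f t ∂μ - ∫ t in F, s t ∂μ = ∫ t in F, (f t - s t) ∂μ :=
      (integral_sub hFint (hsint F)).symm
    have e2 : ∫ t in S, f t ∂μ - ∫ t in S, s t ∂μ = ∫ t in S, (f t - s t) ∂μ :=
      (integral_sub hfS (hsint S)).symm
    have halg : (∫ t in F, f t ∂μ) - δ • ∫ t in S, f t ∂μ
        = ((∫ t in F, f t ∂μ) - ∫ t in F, s t ∂μ)
          - δ • ((∫ t in S, f t ∂μ) - ∫ t in S, s t ∂μ) := by
      rw [smul_sub, hsint']
      abel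
    calc ‖(∫ t in F, f t ∂μ) - δ • ∫ t in S, f t ∂μ‖
        = ‖(∫ t in F, (f t - s t) ∂μ) - δ • ∫ t in S, (f t - s t) ∂μ‖ := by
          rw [halg, e1, e2]
      _ ≤ ‖∫ t in F, (f t - s t) ∂μ‖ + ‖δ • ∫ t in S, (f t - s t) ∂μ‖ := norm_sub_le _ _
      _ = ‖∫ t in F, (f t - s t) ∂μ‖ + δ * ‖∫ t in S, (f t - s t) ∂μ‖ := by
          rw [norm_smul, Real.norm_of_nonneg hδ0.le]
      _ ≤ err + 1 * err := by
          gcongr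
      _ = 2 * err := by ring
      _ < 2 * (ε / 4) := by linarith
      _ ≤ ε := by linarith
  have hcomp : ‖(∫ t in F, (a t ω - g t ω) ∂μ) - δ • ∫ t in S, (a t ω - g t ω) ∂μ‖ < ε := by
    rw [← hcoord F hFint, ← hcoord S hfS]
    have heq : (∫ t in F, f t ∂μ) ω - δ • (∫ t in S, f t ∂μ) ω
        = ((∫ t in F, f t ∂μ) - δ • ∫ t in S, f t ∂μ) ω := rfl
    rw [heq]
    exact lt_of_le_of_lt (norm_le_pi_norm _ ω) hkey
  exact hball ω (by rwa [Metric.mem_ball, dist_eq_norm])
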